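/- Let Q be a nonempty dense linear order without endpoints, let a < c < b in Q, and for u < w in Q and j ≥ 0 let R_j(u,w) = {x ∈ Q^j : w > x_1 > x_2 > ⋯ > x_j > u} (so R_0(u,w) is the one-point set Q^0). Then for every n ≥ 1 the set R_n(a,b) admits a partition into 2n+1 pairwise disjoint definable sets S_0, …, S_n, T_0, …, T_{n−1} such that each S_i (0 ≤ i ≤ n) is in definable bijection with R_i(c,b) × R_{n−i}(a,c) and each T_i (0 ≤ i ≤ n−1) is in definable bijection with R_i(c,b) × R_{n−1−i}(a,c). -/

import Mathlib

open FirstOrder FirstOrder.Language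

attribute [local instance] FirstOrder.Language.orderStructure

/-- A subset of `Q^n` is definable if it is defined by a first-order formula in the
language of orders with finitely many parameters from `Q`. -/
def DLODefinable {Q : Type*} [LinearOrder Q] {n : ℕ} (s : Set (Fin n → Q)) : Prop :=
  ∃ A : Set Q, A.Finite ∧ A.Definable Language.order s

/-- The graph of `f` restricted to `D₁`, as a subset of `Q^(n+m)`. -/
def graphOn {Q : Type*} {n m : ℕ} (D₁ : Set (Fin n → Q))
    (f : (Fin n → Q) → (Fin m → Q)) : Set (Fin (n + m) → Q) :=
  {z | ∃ x ∈ D₁, z = Fin.append x (f x)}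

/-- A definable bijection from `D₁ ⊆ Q^n` onto `D₂ ⊆ Q^m`: a bijection from `D₁` onto `D₂`
whose graph is a definable subset of `Q^(n+m)`. -/
def DefBij {Q : Type*} [LinearOrder Q] {n m : ℕ} (D₁ : Set (Fin n → Q))
    (D₂ : Set (Fin m → Q)) : Prop :=
  ∃ f : (Fin n → Q) → (Fin m → Q), Set.BijOn f D₁ D₂ ∧ DLODefinable (graphOn D₁ f)

/-- The cartesian product of `D₁ ⊆ Q^n` and `D₂ ⊆ Q^m`, viewed inside `Q^(n+m)`. -/
def pairSet {Q : Type*} {n m : ℕ} (D₁ : Set (Fin n → Q)) (D₂ : Set (Fin m → Q)) :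
    Set (Fin (n + m) → Q) :=
  {z | ∃ x ∈ D₁, ∃ y ∈ D₂, z = Fin.append x y}

/-- `R_j(u,w)`: strictly decreasing `j`-tuples with all entries in the open interval `(u,w)`. -/
def Rint {Q : Type*} [LinearOrder Q] (u w : Q) (j : ℕ) : Set (Fin j → Q) :=
  {x | StrictAnti x ∧ ∀ i, u < x i ∧ x i < w}

namespace DLOSplit

open Set

variable {Q : Type*} [LinearOrder Q] {α : Type*}

instance ordStr : Language.order.OrderedStructure Q := ⟨fun _ => Iff.rfl⟩

instance isOrderedWC (A : Set Q) : IsOrdered (Language.order[[A]]) := ⟨Sum.inl leSymb⟩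

instance orderedStructureWC (A : Set Q) : (Language.order[[A]]).OrderedStructure Q := by
  constructor
  intro x
  have h : (leSymb : (Language.order[[A]]).Relations 2) = Sum.inl leSymb := rfl
  rw [h, withConstants_relMap_sumInl, relMap_leSymb]

lemma def_lt_coords (A : Set Q) (i j : α) :
    A.Definable Language.order {x : α → Q | x i < x j} := by
  refine ⟨Term.lt (Term.var (Sum.inl i)) (Term.var (Sum.inl j)), ?_⟩
  ext v
  simp [Formula.Realize, Term.realize_lt]

lemma def_lt_const (A : Set Q) {q : Q} (hq : q ∈ A) (i : α) :
    A.Definable Language.order {x : α → Q | x i < q} := by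
  refine ⟨Term.lt (Term.var (Sum.inl i))
    (Constants.term (Language.con Language.order ⟨q, hq⟩)), ?_⟩
  ext v
  simp [Formula.Realize, Term.realize_lt]

lemma def_const_lt (A : Set Q) {q : Q} (hq : q ∈ A) (i : α) :
    A.Definable Language.order {x : α → Q | q < x i} := by
  refine ⟨Term.lt (Constants.term (Language.con Language.order ⟨q, hq⟩))
    (Term.var (Sum.inl i)), ?_⟩
  ext v
  simp [Formula.Realize, Term.realize_lt]

lemma def_eq_coords (A : Set Q) (i j : α) :
    A.Definable Language.order {x : α → Q | x i = x j} := by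
  have h : {x : α → Q | x i = x j} =
      ({x : α → Q | x i < x j} ∪ {x : α → Q | x j < x i})ᶜ := by
    ext x; simp [not_or, le_antisymm_iff, not_lt, and_comm]
  rw [h]
  exact ((def_lt_coords A i j).union (def_lt_coords A j i)).compl

lemma def_eq_const (A : Set Q) {q : Q} (hq : q ∈ A) (i : α) :
    A.Definable Language.order {x : α → Q | x i = q} := by
  have h : {x : α → Q | x i = q} =
      ({x : α → Q | x i < q} ∪ {x : α → Q | q < x i})ᶜ := by
    ext x; simp [not_or, le_antisymm_iff, not_lt, and_comm]
  rw [h]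
  exact ((def_lt_const A hq i).union (def_const_lt A hq i)).compl

lemma def_strictAnti (A : Set Q) (n : ℕ) :
    A.Definable Language.order {x : Fin n → Q | StrictAnti x} := by
  have h : {x : Fin n → Q | StrictAnti x} =
      ⋂ p ∈ (Finset.univ : Finset (Fin n × Fin n)),
        (if p.1 < p.2 then {x : Fin n → Q | x p.2 < x p.1} else Set.univ) := by
    ext x
    simp only [Set.mem_setOf_eq, Set.mem_iInter]
    constructor
    · intro h p _; split_ifs with hp; exacts [h hp, Set.mem_univ x]
    · intro h p q hpq
      have := h (p, q) (Finset.mem_univ _)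
      rwa [if_pos hpq] at this
  rw [h]
  exact Set.definable_biInter_finset
    (fun p => by split_ifs; exacts [def_lt_coords A _ _, Set.definable_univ]) _

lemma graphOn_comp {n m : ℕ} (D : Set (Fin n → Q)) (e : Fin m → Fin n) :
    _root_.graphOn D (fun x => x ∘ e) =
      ((fun z : Fin (n + m) → Q => z ∘ Fin.castAdd m) ⁻¹' D) ∩
      ⋂ j ∈ (Finset.univ : Finset (Fin m)),
        {z : Fin (n + m) → Q | z (Fin.natAdd n j) = z (Fin.castAdd m (e j))} := by
  ext z
  simp only [_root_.graphOn, Set.mem_setOf_eq, Set.mem_inter_iff, Set.mem_preimage, Set.mem_iInter,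
    Finset.mem_univ, forall_true_left]
  constructor
  · rintro ⟨x, hx, rfl⟩
    have hz : Fin.append x (x ∘ e) ∘ Fin.castAdd m = x := by
      funext k; simp [Fin.append_left]
    refine ⟨by rw [hz]; exact hx, fun j => ?_⟩
    simp [Fin.append_left, Fin.append_right]
  · rintro ⟨h1, h2⟩
    refine ⟨z ∘ Fin.castAdd m, h1, ?_⟩
    funext k
    refine Fin.addCases (fun k => ?_) (fun k => ?_) k
    · simp [Fin.append_left]
    · simp only [Fin.append_right, Function.comp_apply]
      exact h2 k

lemma def_graphOn_comp (A : Set Q) {n m : ℕ} {D : Set (Fin n → Q)}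
    (hD : A.Definable Language.order D) (e : Fin m → Fin n) :
    A.Definable Language.order (_root_.graphOn D (fun x => x ∘ e)) := by
  rw [graphOn_comp]
  exact (hD.preimage_comp (Fin.castAdd m)).inter
    (Set.definable_biInter_finset (fun j => def_eq_coords A _ _) _)

/-- The `S` pieces. -/
def Sset (a c b : Q) (n i : ℕ) : Set (Fin n → Q) :=
  {x | StrictAnti x ∧ ∀ j : Fin n,
    ((j : ℕ) < i → c < x j ∧ x j < b) ∧ (i ≤ (j : ℕ) → a < x j ∧ x j < c)}

/-- The `T` pieces. -/
def Tset (a c b : Q) (n : ℕ) (i : Fin n) : Set (Fin n → Q) :=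
  {x | StrictAnti x ∧ (∀ j, a < x j ∧ x j < b) ∧ x i = c}

lemma def_Sset {a c b : Q} (A : Set Q) (ha : a ∈ A) (hc : c ∈ A) (hb : b ∈ A) (n i : ℕ) :
    A.Definable Language.order (Sset a c b n i) := by
  have h : Sset a c b n i = {x : Fin n → Q | StrictAnti x} ∩
      ⋂ j ∈ (Finset.univ : Finset (Fin n)),
        (if (j : ℕ) < i then {x : Fin n → Q | c < x j} ∩ {x : Fin n → Q | x j < b}
         else {x : Fin n → Q | a < x j} ∩ {x : Fin n → Q | x j < c}) := by
    ext x
    simp only [Sset, Set.mem_setOf_eq, Set.mem_inter_iff, Set.mem_iInter, Finset.mem_univ,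
      forall_true_left]
    refine and_congr_right fun _ => forall_congr' fun j => ?_
    split_ifs with hj
    · simp [hj, Nat.not_le.mpr hj]
    · simp [hj, Nat.le_of_not_lt hj]
  rw [h]
  exact (def_strictAnti A n).inter
    (Set.definable_biInter_finset (fun j => by
      split_ifs
      · exact (def_const_lt A hc j).inter (def_lt_const A hb j)
      · exact (def_const_lt A ha j).inter (def_lt_const A hc j)) _)

lemma def_Tset {a c b : Q} (A : Set Q) (ha : a ∈ A) (hc : c ∈ A) (hb : b ∈ A) (n : ℕ)
    (i : Fin n) : A.Definable Language.order (Tset a c b n i) := by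
  have h : Tset a c b n i = ({x : Fin n → Q | StrictAnti x} ∩
      ⋂ j ∈ (Finset.univ : Finset (Fin n)),
        ({x : Fin n → Q | a < x j} ∩ {x : Fin n → Q | x j < b})) ∩
      {x : Fin n → Q | x i = c} := by
    ext x
    simp only [Tset, Set.mem_setOf_eq, Set.mem_inter_iff, Set.mem_iInter, Finset.mem_univ,
      forall_true_left]
    tauto
  rw [h]
  exact ((def_strictAnti A n).inter
    (Set.definable_biInter_finset
      (fun j => (def_const_lt A ha j).inter (def_lt_const A hb j)) _)).inter
    (def_eq_const A hc i)

lemma defBij_Sset {a c b : Q} (hac : a < c) (hcb : c < b) {n i : ℕ} (hi : i ≤ n) :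
    DefBij (Sset a c b n i) (pairSet (Rint c b i) (Rint a c (n - i))) := by
  have hmn : i + (n - i) = n := by omega
  refine ⟨fun x => x ∘ Fin.cast hmn, ⟨?_, ?_, ?_⟩, ?_⟩
  · -- MapsTo
    rintro x ⟨hanti, hbd⟩
    refine ⟨fun j => x (Fin.cast hmn (Fin.castAdd (n - i) j)), ⟨?_, ?_⟩,
      fun j => x (Fin.cast hmn (Fin.natAdd i j)), ⟨?_, ?_⟩, ?_⟩
    · intro p q hpq
      exact hanti (show _ by rw [Fin.lt_def]; simpa using hpq)
    · intro j
      exact (hbd _).1 (by simpa using j.isLt)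
    · intro p q hpq
      exact hanti (show _ by rw [Fin.lt_def]; simpa using hpq)
    · intro j
      exact (hbd _).2 (by simp)
    · funext k
      refine Fin.addCases (fun j => ?_) (fun j => ?_) k
      · rw [Fin.append_left]; rfl
      · rw [Fin.append_right]; rfl
  · -- InjOn
    intro x _ y _ h
    funext p
    exact congrFun h (Fin.cast hmn.symm p)
  · -- SurjOn
    rintro z ⟨x₁, hx₁, x₂, hx₂, rfl⟩
    refine ⟨Fin.append x₁ x₂ ∘ Fin.cast hmn.symm, ?_, rfl⟩
    have hvlt : ∀ (p : Fin n) (hp : (p : ℕ) < i),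
        (Fin.append x₁ x₂ ∘ Fin.cast hmn.symm) p = x₁ ⟨(p : ℕ), hp⟩ := by
      intro p hp
      have h1 : Fin.cast hmn.symm p = Fin.castAdd (n - i) ⟨(p : ℕ), hp⟩ := by
        ext; simp
      simp only [Function.comp_apply, h1, Fin.append_left]
    have hvge : ∀ (p : Fin n) (hp : i ≤ (p : ℕ)),
        (Fin.append x₁ x₂ ∘ Fin.cast hmn.symm) p = x₂ ⟨(p : ℕ) - i, by omega⟩ := by
      intro p hp
      have h1 : Fin.cast hmn.symm p = Fin.natAdd i ⟨(p : ℕ) - i, by omega⟩ := by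
        ext; simp; omega
      simp only [Function.comp_apply, h1, Fin.append_right]
    constructor
    · intro p q hpq
      rcases Nat.lt_or_ge (p : ℕ) i with hp | hp
      · rcases Nat.lt_or_ge (q : ℕ) i with hq | hq
        · rw [hvlt p hp, hvlt q hq]
          exact hx₁.1 (show (⟨(p : ℕ), hp⟩ : Fin i) < ⟨(q : ℕ), hq⟩ from hpq)
        · rw [hvlt p hp, hvge q hq]
          exact lt_trans (hx₂.2 _).2 (hx₁.2 _).1
      · have hq : i ≤ (q : ℕ) := le_trans hp (le_of_lt hpq)
        rw [hvge p hp, hvge q hq]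
        exact hx₂.1 (show (⟨(p : ℕ) - i, _⟩ : Fin (n - i)) < ⟨(q : ℕ) - i, _⟩ by
          simp only [Fin.mk_lt_mk]
          have : (p : ℕ) < (q : ℕ) := hpq
          omega)
    · intro j
      constructor
      · intro hj
        rw [hvlt j hj]
        exact ⟨(hx₁.2 _).1, (hx₁.2 _).2⟩
      · intro hj
        rw [hvge j hj]
        exact ⟨(hx₂.2 _).1, (hx₂.2 _).2⟩
  · -- graph definable
    exact ⟨{a, c, b}, Set.toFinite _,
      def_graphOn_comp _ (def_Sset _ (by simp) (by simp) (by simp) n i) _⟩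

lemma defBij_Tset {a c b : Q} (hac : a < c) (hcb : c < b) {n : ℕ} (i : Fin n) :
    DefBij (Tset a c b n i) (pairSet (Rint c b (i : ℕ)) (Rint a c (n - 1 - (i : ℕ)))) := by
  have hkn : (i : ℕ) < n := i.isLt
  set k := (i : ℕ) with hkdef
  let e : Fin (k + (n - 1 - k)) → Fin n := fun j =>
    if h : (j : ℕ) < k then ⟨(j : ℕ), by omega⟩
    else ⟨(j : ℕ) + 1, by have := j.isLt; omega⟩
  have he_lt : ∀ (j : Fin (k + (n - 1 - k))) (h : (j : ℕ) < k),
      e j = ⟨(j : ℕ), by omega⟩ := fun j h => dif_pos h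
  have he_ge : ∀ (j : Fin (k + (n - 1 - k))) (h : k ≤ (j : ℕ)),
      e j = ⟨(j : ℕ) + 1, by have := j.isLt; omega⟩ := fun j h => dif_neg (Nat.not_lt.mpr h)
  refine ⟨fun x => x ∘ e, ⟨?_, ?_, ?_⟩, ?_⟩
  · -- MapsTo
    rintro x ⟨hanti, hbd, hic⟩
    refine ⟨fun j => x ⟨(j : ℕ), by have := j.isLt; omega⟩, ⟨?_, ?_⟩,
      fun j => x ⟨k + 1 + (j : ℕ), by have := j.isLt; omega⟩, ⟨?_, ?_⟩, ?_⟩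
    · intro p q hpq
      exact hanti (show _ by rw [Fin.lt_def]; simpa using hpq)
    · intro j
      refine ⟨?_, (hbd _).2⟩
      have h1 : (⟨(j : ℕ), by have := j.isLt; omega⟩ : Fin n) < i := by
        rw [Fin.lt_def]; exact j.isLt
      have h2 := hanti h1
      rwa [hic] at h2
    · intro p q hpq
      refine hanti (show _ by rw [Fin.lt_def]; simp; omega)
    · intro j
      refine ⟨(hbd _).1, ?_⟩
      have h1 : i < (⟨k + 1 + (j : ℕ), by have := j.isLt; omega⟩ : Fin n) := by
        rw [Fin.lt_def]; simp; omega
      have h2 := hanti h1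
      rwa [hic] at h2
    · funext p
      refine Fin.addCases (fun j => ?_) (fun j => ?_) p
      · rw [Fin.append_left]
        simp only [Function.comp_apply]
        rw [he_lt _ (by simpa using j.isLt)]
        exact congrArg x (Fin.ext (by simp))
      · rw [Fin.append_right]
        simp only [Function.comp_apply]
        rw [he_ge _ (by simp)]
        exact congrArg x (Fin.ext (by simp; omega))
  · -- InjOn
    rintro x hx y hy h
    funext p
    rcases Nat.lt_trichotomy (p : ℕ) k with hp | hp | hp
    · have h1 := congrFun h (⟨(p : ℕ), by omega⟩ : Fin (k + (n - 1 - k)))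
      simp only [Function.comp_apply] at h1
      have h2 : e (⟨(p : ℕ), by omega⟩ : Fin (k + (n - 1 - k))) = p := by
        rw [he_lt _ (by simpa using hp)]
      rwa [h2] at h1
    · have hpi : p = i := Fin.ext hp
      rw [hpi, hx.2.2, hy.2.2]
    · have h1 := congrFun h (⟨(p : ℕ) - 1, by have := p.isLt; omega⟩ : Fin (k + (n - 1 - k)))
      simp only [Function.comp_apply] at h1
      have h2 : e (⟨(p : ℕ) - 1, by have := p.isLt; omega⟩ : Fin (k + (n - 1 - k))) = p := by
        rw [he_ge _ (by simp; omega)]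
        exact Fin.ext (by simp; omega)
      rwa [h2] at h1
  · -- SurjOn
    rintro z ⟨x₁, hx₁, x₂, hx₂, rfl⟩
    let x : Fin n → Q := fun p =>
      if h1 : (p : ℕ) < k then x₁ ⟨(p : ℕ), h1⟩
      else if h2 : (p : ℕ) = k then c
      else x₂ ⟨(p : ℕ) - k - 1, by have := p.isLt; omega⟩
    have hv1 : ∀ (p : Fin n) (h : (p : ℕ) < k), x p = x₁ ⟨(p : ℕ), h⟩ := fun p h => dif_pos h
    have hv2 : ∀ (p : Fin n) (h : (p : ℕ) = k), x p = c := by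
      intro p h
      show dite _ _ _ = c
      rw [dif_neg (by omega), dif_pos h]
    have hv3 : ∀ (p : Fin n) (h : k < (p : ℕ)),
        x p = x₂ ⟨(p : ℕ) - k - 1, by have := p.isLt; omega⟩ := by
      intro p h
      show dite _ _ _ = _
      rw [dif_neg (by omega), dif_neg (by omega)]
    refine ⟨x, ⟨?_, ?_, hv2 i rfl⟩, ?_⟩
    · intro p q hpq
      have hpq' : (p : ℕ) < (q : ℕ) := hpq
      rcases Nat.lt_trichotomy (p : ℕ) k with hp | hp | hp
      · rcases Nat.lt_trichotomy (q : ℕ) k with hq | hq | hq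
        · rw [hv1 p hp, hv1 q hq]
          exact hx₁.1 (show _ by rw [Fin.lt_def]; exact hpq')
        · rw [hv1 p hp, hv2 q hq]
          exact (hx₁.2 _).1
        · rw [hv1 p hp, hv3 q hq]
          exact lt_trans (hx₂.2 _).2 (hx₁.2 _).1
      · rw [hv2 p hp, hv3 q (by omega)]
        exact (hx₂.2 _).2
      · rw [hv3 p hp, hv3 q (by omega)]
        exact hx₂.1 (show _ by rw [Fin.lt_def]; simp; omega)
    · intro j
      rcases Nat.lt_trichotomy (j : ℕ) k with hj | hj | hj
      · rw [hv1 j hj]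
        exact ⟨lt_trans hac (hx₁.2 _).1, (hx₁.2 _).2⟩
      · rw [hv2 j hj]
        exact ⟨hac, hcb⟩
      · rw [hv3 j hj]
        exact ⟨(hx₂.2 _).1, lt_trans (hx₂.2 _).2 hcb⟩
    · funext p
      refine Fin.addCases (fun j => ?_) (fun j => ?_) p
      · rw [Fin.append_left]
        simp only [Function.comp_apply]
        rw [he_lt _ (by simpa using j.isLt), hv1 _ (by simpa using j.isLt)]
        exact congrArg x₁ (Fin.ext (by simp))
      · rw [Fin.append_right]
        simp only [Function.comp_apply]
        rw [he_ge _ (by simp), hv3 _ (by simp)]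
        exact congrArg x₂ (Fin.ext (by simp; omega))
  · exact ⟨{a, c, b}, Set.toFinite _,
      def_graphOn_comp _ (def_Tset _ (by simp) (by simp) (by simp) n i) _⟩

lemma classify {a c b : Q} {n : ℕ} {x : Fin n → Q} (hx : x ∈ Rint a b n)
    (hne : ∀ j, x j ≠ c) : ∃ i : ℕ, i ≤ n ∧ x ∈ Sset a c b n i := by
  classical
  set s : Finset (Fin n) := Finset.univ.filter (fun j => c < x j) with hs
  have hdc : ∀ {j j' : Fin n}, j' ≤ j → j ∈ s → j' ∈ s := by
    intro j j' hle hj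
    simp only [hs, Finset.mem_filter, Finset.mem_univ, true_and] at hj ⊢
    exact lt_of_lt_of_le hj (hx.1.antitone hle)
  have key : ∀ j : Fin n, c < x j ↔ (j : ℕ) < s.card := by
    intro j
    constructor
    · intro hj
      have hsub : Finset.Iic j ⊆ s := fun j' hj' =>
        hdc (Finset.mem_Iic.mp hj') (by simp [hs, hj])
      have h1 := Finset.card_le_card hsub
      rw [Fin.card_Iic] at h1
      omega
    · intro hj
      by_contra hcon
      have hsub : s ⊆ Finset.Iio j := by
        intro j' hj'
        rw [Finset.mem_Iio]
        by_contra h2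
        have h3 := hdc (not_lt.mp h2) hj'
        simp only [hs, Finset.mem_filter, Finset.mem_univ, true_and] at h3
        exact hcon h3
      have h1 := Finset.card_le_card hsub
      rw [Fin.card_Iio] at h1
      omega
  refine ⟨s.card, le_trans (Finset.card_le_univ s) (by simp), hx.1, fun j => ?_⟩
  constructor
  · intro hj
    exact ⟨(key j).mpr hj, (hx.2 j).2⟩
  · intro hj
    refine ⟨(hx.2 j).1, ?_⟩
    have h1 : ¬ c < x j := fun h => by have := (key j).mp h; omega
    exact lt_of_le_of_ne (not_lt.mp h1) (hne j)

end DLOSplit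


/-- Splitting an interval at an intermediate point: `R_n(a,b)` partitions into `2n+1`
pairwise disjoint definable pieces `S_0, …, S_n, T_0, …, T_{n-1}` with
`S_i ≈ R_i(c,b) × R_{n-i}(a,c)` and `T_i ≈ R_i(c,b) × R_{n-1-i}(a,c)`. -/
theorem dlo_interval_split {Q : Type*} [LinearOrder Q] [DenselyOrdered Q] [NoMinOrder Q]
    [NoMaxOrder Q] [Nonempty Q] (a c b : Q) (hac : a < c) (hcb : c < b) (n : ℕ)
    (hn : 1 ≤ n) :
    ∃ (S : Fin (n + 1) → Set (Fin n → Q)) (T : Fin n → Set (Fin n → Q)),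
      (∀ i j, i ≠ j → Disjoint (S i) (S j)) ∧
      (∀ i j, i ≠ j → Disjoint (T i) (T j)) ∧
      (∀ i j, Disjoint (S i) (T j)) ∧
      ((⋃ i, S i) ∪ (⋃ i, T i) = Rint a b n) ∧
      (∀ i : Fin (n + 1), DLODefinable (S i) ∧
        DefBij (S i) (pairSet (Rint c b (i : ℕ)) (Rint a c (n - (i : ℕ))))) ∧
      (∀ i : Fin n, DLODefinable (T i) ∧
        DefBij (T i) (pairSet (Rint c b (i : ℕ)) (Rint a c (n - 1 - (i : ℕ))))) := by
  classical
  refine ⟨fun i => DLOSplit.Sset a c b n (i : ℕ), fun i => DLOSplit.Tset a c b n i,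
    ?_, ?_, ?_, ?_, ?_, ?_⟩
  · -- S disjoint
    have key : ∀ {i j : Fin (n + 1)}, (i : ℕ) < (j : ℕ) → ∀ {x : Fin n → Q},
        x ∈ DLOSplit.Sset a c b n (i : ℕ) → x ∈ DLOSplit.Sset a c b n (j : ℕ) → False := by
      intro i j hij x hxi hxj
      have hin : (i : ℕ) < n := by have := j.isLt; omega
      have h1 := (hxi.2 ⟨(i : ℕ), hin⟩).2 (by simp)
      have h2 := (hxj.2 ⟨(i : ℕ), hin⟩).1 (by simpa using hij)
      exact absurd h2.1 (not_lt.mpr (le_of_lt h1.2))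
    intro i j hne
    rw [Set.disjoint_left]
    intro x hxi hxj
    rcases Ne.lt_or_gt hne with h | h
    · exact key h hxi hxj
    · exact key h hxj hxi
  · -- T disjoint
    intro i j hne
    rw [Set.disjoint_left]
    intro x hxi hxj
    exact hne (hxi.1.injective (hxi.2.2.trans hxj.2.2.symm))
  · -- S-T disjoint
    intro i j
    rw [Set.disjoint_left]
    intro x hS hT
    have hc := hT.2.2
    rcases Nat.lt_or_ge (j : ℕ) (i : ℕ) with h | h
    · exact absurd hc (ne_of_gt ((hS.2 j).1 h).1)
    · exact absurd hc (ne_of_lt ((hS.2 j).2 h).2)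
  · -- union
    ext x
    simp only [Set.mem_union, Set.mem_iUnion]
    constructor
    · rintro (⟨i, hi⟩ | ⟨i, hi⟩)
      · refine ⟨hi.1, fun j => ?_⟩
        rcases Nat.lt_or_ge (j : ℕ) (i : ℕ) with h | h
        · exact ⟨lt_trans hac ((hi.2 j).1 h).1, ((hi.2 j).1 h).2⟩
        · exact ⟨((hi.2 j).2 h).1, lt_trans ((hi.2 j).2 h).2 hcb⟩
      · exact ⟨hi.1, hi.2.1⟩
    · intro hx
      by_cases hc : ∃ j, x j = c
      · obtain ⟨j, hj⟩ := hc
        exact Or.inr ⟨j, hx.1, hx.2, hj⟩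
      · push_neg at hc
        obtain ⟨i, hin, hi⟩ := DLOSplit.classify hx hc
        exact Or.inl ⟨⟨i, by omega⟩, hi⟩
  · intro i
    exact ⟨⟨{a, c, b}, Set.toFinite _,
      DLOSplit.def_Sset _ (by simp) (by simp) (by simp) n (i : ℕ)⟩,
      DLOSplit.defBij_Sset hac hcb (by have := i.isLt; omega)⟩
  · intro i
    exact ⟨⟨{a, c, b}, Set.toFinite _,
      DLOSplit.def_Tset _ (by simp) (by simp) (by simp) n i⟩,
      DLOSplit.defBij_Tset hac hcb i⟩
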